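/- Let m ≥ 1 be an integer, let E_m(s) be the s×s real matrices defined below, and let Δ(m) = ∑_{k=0}^{m} [binom(m,k) / (k·λ₁ + (m−k)·λ₂ − (m−4))] · (λ₂/√17)^k · (−λ₁/√17)^{m−k}, where λ₁ = (3−√17)/2 and λ₂ = (3+√17)/2. Then det E_m(m) = Δ(m) · det E_m(m+1); that is, det E_m(m+1)/det E_m(m) = Δ(m)^{−1} whenever the quotient is defined. -/

import Mathlib

/-- The matrix `E_m(s)`, the lower-right `s × s` block of `C_m = A_m - (m-4)·I`:
diagonal entries `2m + 7 - 3s + 3j`, subdiagonal entries `(E)_{j,j-1} = s - j`,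
superdiagonal entries `(E)_{j,j+1} = 2(m - s + j + 2)`, all other entries `0`. -/
noncomputable def paperE (m s : ℕ) : Matrix (Fin s) (Fin s) ℝ :=
  Matrix.of fun j k =>
    if (j : ℕ) = (k : ℕ) then 2 * (m : ℝ) + 7 - 3 * (s : ℝ) + 3 * ((j : ℕ) : ℝ)
    else if (j : ℕ) = (k : ℕ) + 1 then (s : ℝ) - ((j : ℕ) : ℝ)
    else if (k : ℕ) = (j : ℕ) + 1 then 2 * ((m : ℝ) - (s : ℝ) + ((j : ℕ) : ℝ) + 2)
    else 0

/-- The quantity `Δ(m)` of the paper, with `λ₁ = (3-√17)/2` and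
`λ₂ = (3+√17)/2` (so `λ₂ - λ₁ = √17`). -/
noncomputable def paperDelta (m : ℕ) : ℝ :=
  ∑ k ∈ Finset.range (m + 1),
    (Nat.choose m k : ℝ) /
        ((k : ℝ) * ((3 - Real.sqrt 17) / 2) + ((m : ℝ) - (k : ℝ)) * ((3 + Real.sqrt 17) / 2)
          - ((m : ℝ) - 4)) *
      (((3 + Real.sqrt 17) / 2) / Real.sqrt 17) ^ k *
      ((-((3 - Real.sqrt 17) / 2)) / Real.sqrt 17) ^ (m - k)

open Polynomial Finset

namespace PaperAux

lemma pow_helper (a : ℝ) (n : ℕ) :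
    (X - C a) * (C (n : ℝ) * (X - C a) ^ (n - 1)) = C (n : ℝ) * (X - C a) ^ n := by
  cases n with
  | zero => simp
  | succ n => simp only [Nat.add_sub_cancel]; push_cast; ring

lemma deriv_prod (a b : ℝ) (k l : ℕ) :
    (X - C a) * (X - C b) * derivative ((X - C a) ^ k * (X - C b) ^ l)
      = (C (k : ℝ) * (X - C b) + C (l : ℝ) * (X - C a)) * ((X - C a) ^ k * (X - C b) ^ l) := by
  have h1 := pow_helper a k
  have h2 := pow_helper b l
  simp only [derivative_mul, derivative_pow, derivative_X_sub_C, mul_one]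
  linear_combination ((X - C b) ^ l * (X - C b)) * h1 + ((X - C a) ^ k * (X - C a)) * h2

lemma eigen_poly (a b : ℝ) (hab3 : a + b = 3) (hab2 : a * b = -2) (k l : ℕ) :
    (C 2 + C 3 * X - X ^ 2) * derivative ((X - C a) ^ k * (X - C b) ^ l)
        + C ((k : ℝ) + (l : ℝ)) * X * ((X - C a) ^ k * (X - C b) ^ l)
      = C ((k : ℝ) * b + (l : ℝ) * a) * ((X - C a) ^ k * (X - C b) ^ l) := by
  have hfac : (C 2 + C 3 * X - X ^ 2 : ℝ[X]) = -((X - C a) * (X - C b)) := by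
    have h3 : (C a + C b : ℝ[X]) = C 3 := by rw [← C_add, hab3]
    have h2 : (C a * C b : ℝ[X]) = -(C 2) := by rw [← C_mul, hab2]; simp
    linear_combination (-X) * h3 + h2
  rw [hfac]
  have hd := deriv_prod a b k l
  simp only [C_add, C_mul]
  linear_combination (-1 : ℝ[X]) * hd

/-- coefficient 0 of the eigen equation -/
lemma row_zero (p : ℝ[X]) (mr ν : ℝ)
    (h : (C 2 + C 3 * X - X ^ 2) * derivative p + C mr * X * p = C ν * p) :
    2 * p.coeff 1 = ν * p.coeff 0 := by
  have h' : C 2 * derivative p + C 3 * (X * derivative p) - X ^ 2 * derivative p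
      + C mr * (X * p) = C ν * p := by linear_combination h
  have := congrArg (fun q : ℝ[X] => q.coeff 0) h'
  simpa [coeff_derivative, mul_coeff_zero] using this

lemma row_one (p : ℝ[X]) (mr ν : ℝ)
    (h : (C 2 + C 3 * X - X ^ 2) * derivative p + C mr * X * p = C ν * p) :
    2 * (p.coeff 2 * 2) + 3 * p.coeff 1 + mr * p.coeff 0 = ν * p.coeff 1 := by
  have h' : C 2 * derivative p + C 3 * (X * derivative p) - X ^ 2 * derivative p
      + C mr * (X * p) = C ν * p := by linear_combination h
  have := congrArg (fun q : ℝ[X] => q.coeff 1) h'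
  simp only [coeff_add, coeff_sub, coeff_C_mul, coeff_X_mul, coeff_derivative] at this
  have hX2 : (X ^ 2 * derivative p).coeff 1 = 0 := by
    rw [coeff_X_pow_mul' (derivative p) 2 1]; simp
  rw [hX2] at this
  norm_num at this
  linarith [this]

lemma row_succ_succ (p : ℝ[X]) (mr ν : ℝ) (n : ℕ)
    (h : (C 2 + C 3 * X - X ^ 2) * derivative p + C mr * X * p = C ν * p) :
    2 * (p.coeff (n + 3) * ((n : ℝ) + 3)) + 3 * (p.coeff (n + 2) * ((n : ℝ) + 2))
      + (mr - ((n : ℝ) + 1)) * p.coeff (n + 1) = ν * p.coeff (n + 2) := by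
  have h' : C 2 * derivative p + C 3 * (X * derivative p) - X ^ 2 * derivative p
      + C mr * (X * p) = C ν * p := by linear_combination h
  have hc := congrArg (fun q : ℝ[X] => q.coeff (n + 2)) h'
  simp only [coeff_add, coeff_sub, coeff_C_mul] at hc
  rw [show n + 2 = (n + 1) + 1 from rfl] at hc
  rw [coeff_X_mul, coeff_X_mul] at hc
  rw [show (n + 1) + 1 = n + 2 from rfl] at hc
  rw [coeff_X_pow_mul p.derivative 2 n] at hc
  simp only [coeff_derivative] at hc
  push_cast at hc ⊢
  linarith [hc]

/-- combined row identity for rows `i+1` -/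
lemma row_succ (p : ℝ[X]) (mr ν : ℝ) (i : ℕ)
    (h : (C 2 + C 3 * X - X ^ 2) * derivative p + C mr * X * p = C ν * p) :
    (mr - (i : ℝ)) * p.coeff i + 3 * ((i : ℝ) + 1) * p.coeff (i + 1)
      + 2 * ((i : ℝ) + 2) * p.coeff (i + 2) = ν * p.coeff (i + 1) := by
  cases i with
  | zero => have := row_one p mr ν h; push_cast; linarith [this]
  | succ n =>
      have := row_succ_succ p mr ν n h
      push_cast at this ⊢
      linarith [this]


lemma sum_ite_val {n : ℕ} (U : ℕ → ℝ) (hU : ∀ i, n ≤ i → U i = 0) (c : ℝ) (t : ℕ) :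
    (∑ k : Fin n, if (k : ℕ) = t then c * U k else 0) = c * U t := by
  by_cases h : t < n
  · rw [Finset.sum_eq_single_of_mem ⟨t, h⟩ (Finset.mem_univ _)]
    · simp
    · intro b _ hb
      exact if_neg fun hc => hb (Fin.ext hc)
  · rw [hU t (le_of_not_gt h), mul_zero]
    exact Finset.sum_eq_zero fun k _ => if_neg (by have := k.isLt; omega)

end PaperAux

namespace PaperAux

lemma mulVec_eig (m : ℕ) (p : ℝ[X]) (ν : ℝ)
    (hU : ∀ i, m + 1 ≤ i → p.coeff i = 0)
    (h0 : 2 * p.coeff 1 = ν * p.coeff 0)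
    (hS : ∀ i : ℕ, ((m : ℝ) - (i : ℝ)) * p.coeff i + 3 * ((i : ℝ) + 1) * p.coeff (i + 1)
        + 2 * ((i : ℝ) + 2) * p.coeff (i + 2) = ν * p.coeff (i + 1)) :
    (paperE m (m + 1)).mulVec (fun j : Fin (m + 1) => p.coeff j) =
      fun j : Fin (m+1) => (ν - ((m : ℝ) - 4)) * p.coeff (j : ℕ) := by
  funext j
  have hdot : (paperE m (m + 1)).mulVec (fun j : Fin (m + 1) => p.coeff j) j
      = ∑ k : Fin (m + 1), paperE m (m + 1) j k * p.coeff (k : ℕ) := rfl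
  rw [hdot]
  induction j using Fin.cases with
  | zero =>
      have hsplit : ∀ k : Fin (m + 1), paperE m (m + 1) 0 k * p.coeff (k : ℕ)
          = (if (k : ℕ) = 0 then (2 * (m : ℝ) + 7 - 3 * ((m : ℕ) + 1 : ℝ) + 3 * 0) * p.coeff (k : ℕ) else 0)
            + (if (k : ℕ) = 1 then (2 * ((m : ℝ) - ((m : ℕ) + 1 : ℝ) + 0 + 2)) * p.coeff (k : ℕ) else 0) := by
        intro k
        simp only [paperE, Matrix.of_apply, Fin.val_zero]
        push_cast
        split_ifs <;> first | ring1 | omega | (exfalso; omega)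
      rw [Finset.sum_congr rfl fun k _ => hsplit k, Finset.sum_add_distrib]
      have e1 := sum_ite_val (fun i => p.coeff i) (fun i hi => hU i hi)
        (2 * (m : ℝ) + 7 - 3 * ((m : ℕ) + 1 : ℝ) + 3 * 0) 0
      have e2 := sum_ite_val (fun i => p.coeff i) (fun i hi => hU i hi)
        (2 * ((m : ℝ) - ((m : ℕ) + 1 : ℝ) + 0 + 2)) 1
      rw [Finset.sum_congr rfl fun k _ => rfl, e1, e2]
      simp only [Fin.val_zero]
      push_cast
      linear_combination h0
  | succ i =>
      have hsplit : ∀ k : Fin (m + 1), paperE m (m + 1) i.succ k * p.coeff (k : ℕ)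
          = (if (k : ℕ) = (i : ℕ) then (((m : ℕ) + 1 : ℝ) - ((i : ℕ) + 1 : ℝ)) * p.coeff (k : ℕ) else 0)
            + (if (k : ℕ) = (i : ℕ) + 1 then (2 * (m : ℝ) + 7 - 3 * ((m : ℕ) + 1 : ℝ) + 3 * ((i : ℕ) + 1 : ℝ)) * p.coeff (k : ℕ) else 0)
            + (if (k : ℕ) = (i : ℕ) + 2 then (2 * ((m : ℝ) - ((m : ℕ) + 1 : ℝ) + ((i : ℕ) + 1 : ℝ) + 2)) * p.coeff (k : ℕ) else 0) := by
        intro k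
        simp only [paperE, Matrix.of_apply, Fin.val_succ]
        push_cast
        split_ifs <;> first | ring1 | omega | (exfalso; omega)
      rw [Finset.sum_congr rfl fun k _ => hsplit k, Finset.sum_add_distrib, Finset.sum_add_distrib]
      have e1 := sum_ite_val (fun n => p.coeff n) (fun n hn => hU n hn)
        (((m : ℕ) + 1 : ℝ) - ((i : ℕ) + 1 : ℝ)) (i : ℕ)
      have e2 := sum_ite_val (fun n => p.coeff n) (fun n hn => hU n hn)
        (2 * (m : ℝ) + 7 - 3 * ((m : ℕ) + 1 : ℝ) + 3 * ((i : ℕ) + 1 : ℝ)) ((i : ℕ) + 1)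
      have e3 := sum_ite_val (fun n => p.coeff n) (fun n hn => hU n hn)
        (2 * ((m : ℝ) - ((m : ℕ) + 1 : ℝ) + ((i : ℕ) + 1 : ℝ) + 2)) ((i : ℕ) + 2)
      rw [e1, e2, e3]
      simp only [Fin.val_succ]
      push_cast
      linear_combination hS (i : ℕ)


noncomputable def rt : ℝ := Real.sqrt 17
noncomputable def la : ℝ := (3 - rt) / 2
noncomputable def lb : ℝ := (3 + rt) / 2
noncomputable def pkk (m k : ℕ) : ℝ[X] := (X - C la) ^ k * (X - C lb) ^ (m - k)
noncomputable def muk (m k : ℕ) : ℝ := (k : ℝ) * lb + ((m : ℝ) - (k : ℝ)) * la - ((m : ℝ) - 4)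
noncomputable def wk (m k : ℕ) : ℝ := (m.choose k : ℝ) * (-1) ^ (m - k) / (rt ^ m * muk m k)

lemma rt_pos : 0 < rt := Real.sqrt_pos.mpr (by norm_num)
lemma rt_ne : rt ≠ 0 := rt_pos.ne'
lemma rt_sq : rt ^ 2 = 17 := Real.sq_sqrt (by norm_num)
lemma hla3 : la + lb = 3 := by unfold la lb; ring
lemma hla2 : la * lb = -2 := by
  have := rt_sq; unfold la lb; nlinarith [this]
lemma rt_irr : Irrational rt := by
  have h : Irrational (Real.sqrt (17 : ℕ)) := (by norm_num : Nat.Prime 17).irrational_sqrt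
  simpa [rt] using h

lemma muk_ne (m k : ℕ) (hk : k ≤ m) : muk m k ≠ 0 := by
  intro h
  unfold muk la lb rt at h
  have key : Real.sqrt 17 * (2 * (k : ℝ) - (m : ℝ)) = -((m : ℝ) + 8) := by
    linear_combination 2 * h
  by_cases h2 : 2 * k = m
  · have hm : (m : ℝ) = 2 * (k : ℝ) := by exact_mod_cast h2.symm
    rw [hm] at key
    have : (0:ℝ) ≤ (k:ℝ) := Nat.cast_nonneg k
    nlinarith [key]
  · have hne : (2 * (k : ℝ) - (m : ℝ)) ≠ 0 := by
      intro h0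
      apply h2
      have : (2 * (k:ℕ) : ℝ) = (m : ℝ) := by push_cast; linarith
      exact_mod_cast this
    apply rt_irr
    refine ⟨(-((m : ℚ) + 8)) / (2 * (k : ℚ) - (m : ℚ)), ?_⟩
    unfold rt
    push_cast
    rw [div_eq_iff hne]
    linear_combination -key

lemma coeff_pkk_zero (m k : ℕ) (hk : k ≤ m) : ∀ i, m + 1 ≤ i → (pkk m k).coeff i = 0 := by
  intro i hi
  apply coeff_eq_zero_of_natDegree_lt
  have h1 : (pkk m k).natDegree ≤ k + (m - k) := by
    unfold pkk
    refine natDegree_mul_le.trans (add_le_add ?_ ?_) <;>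
      exact natDegree_pow_le.trans (by simp [natDegree_X_sub_C])
  omega

lemma eig (m k : ℕ) (hk : k ≤ m) :
    (paperE m (m + 1)).mulVec (fun j : Fin (m + 1) => (pkk m k).coeff (j : ℕ)) =
      fun j : Fin (m + 1) => muk m k * (pkk m k).coeff (j : ℕ) := by
  have heq := eigen_poly la lb hla3 hla2 k (m - k)
  rw [Nat.cast_sub hk] at heq
  have hm : (k : ℝ) + ((m : ℝ) - (k : ℝ)) = (m : ℝ) := by ring
  rw [hm] at heq
  have h0 := row_zero _ _ _ heq
  have hS := fun i => row_succ _ _ _ i heq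
  have := mulVec_eig m (pkk m k) ((k : ℝ) * lb + ((m : ℝ) - (k : ℝ)) * la)
    (coeff_pkk_zero m k hk) h0 hS
  simpa [muk] using this

lemma sum_pkk (m : ℕ) :
    (∑ k ∈ range (m + 1), C ((m.choose k : ℝ) * (-1) ^ (m - k)) * pkk m k) = C (rt ^ m) := by
  have h := sub_pow (X - C la) (X - C lb) m
  have hL : (X - C la) - (X - C lb) = C rt := by
    have : lb - la = rt := by unfold la lb; ring
    rw [← this, C_sub]; ring
  rw [hL] at h
  rw [C_pow, h]
  refine Finset.sum_congr rfl fun k hk => ?_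
  have hk' : k ≤ m := by simpa [Nat.lt_succ_iff] using Finset.mem_range.mp hk
  have hsign : ((-1 : ℝ[X])) ^ (k + m) = (-1) ^ (m - k) := by
    have hkm : k + m = (m - k) + 2 * k := by omega
    rw [hkm, pow_add, pow_mul]; norm_num
  rw [hsign]
  unfold pkk
  rw [C_mul]
  simp only [C_eq_natCast, map_pow, map_neg, map_one]
  ring


lemma cancel_mu {A c mu r : ℝ} (h : mu ≠ 0) : A / (r * mu) * (mu * c) = A * c / r := by
  rcases eq_or_ne r 0 with hr | hr
  · simp [hr]
  · field_simp

lemma mulVec_v (m : ℕ) :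
    (paperE m (m + 1)).mulVec
        (fun j : Fin (m + 1) => ∑ k ∈ range (m + 1), wk m k * (pkk m k).coeff (j : ℕ))
      = fun j : Fin (m + 1) => if (j : ℕ) = 0 then 1 else 0 := by
  funext j
  have h1 : (paperE m (m + 1)).mulVec
        (fun j : Fin (m + 1) => ∑ k ∈ range (m + 1), wk m k * (pkk m k).coeff (j : ℕ)) j
      = ∑ k ∈ range (m + 1),
          wk m k * ((paperE m (m + 1)).mulVec
            (fun jj : Fin (m + 1) => (pkk m k).coeff (jj : ℕ)) j) := by
    simp only [Matrix.mulVec, dotProduct, Finset.mul_sum]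
    rw [Finset.sum_comm]
    exact Finset.sum_congr rfl fun k _ => Finset.sum_congr rfl fun κ _ => by ring
  rw [h1]
  have h2 : ∀ k ∈ range (m + 1),
      wk m k * ((paperE m (m + 1)).mulVec
        (fun jj : Fin (m + 1) => (pkk m k).coeff (jj : ℕ)) j)
      = ((m.choose k : ℝ) * (-1) ^ (m - k)) * (pkk m k).coeff (j : ℕ) / rt ^ m := by
    intro k hk
    have hk' : k ≤ m := by simpa [Nat.lt_succ_iff] using Finset.mem_range.mp hk
    simp only [eig m k hk']
    unfold wk
    exact cancel_mu (muk_ne m k hk')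
  rw [Finset.sum_congr rfl h2, ← Finset.sum_div]
  have h3 := congrArg (fun q : ℝ[X] => q.coeff (j : ℕ)) (sum_pkk m)
  simp only [finset_sum_coeff, coeff_C_mul, coeff_C] at h3
  rw [h3]
  by_cases hj : (j : ℕ) = 0
  · simp [hj, div_self (pow_ne_zero m rt_ne)]
  · simp [hj]

lemma term_id (k n : ℕ) (ch μ : ℝ) (hμ : μ ≠ 0) :
    ch * (-1) ^ n / (rt ^ (k + n) * μ) * ((-la) ^ k * (-lb) ^ n)
      = ch / μ * (lb / rt) ^ n * ((-la) / rt) ^ k := by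
  have h2 : ((-1 : ℝ)) ^ (n * 2) = 1 := by rw [mul_comm, pow_mul, neg_one_sq, one_pow]
  rw [pow_add, div_pow, div_pow]
  field_simp
  ring_nf
  simp only [h2]
  ring_nf


end PaperAux

namespace PaperAux

lemma v_zero (m : ℕ) :
    (∑ k ∈ range (m + 1), wk m k * (pkk m k).coeff 0) = paperDelta m := by
  have hcoe : ∀ k, (pkk m k).coeff 0 = (-la) ^ k * (-lb) ^ (m - k) := by
    intro k
    unfold pkk
    rw [coeff_zero_eq_eval_zero]
    simp [zero_sub]
  rw [Finset.sum_congr rfl fun k _ => by rw [hcoe k]]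
  unfold paperDelta
  rw [← Finset.sum_range_reflect]
  refine Finset.sum_congr rfl fun k hk => ?_
  have hk' : k ≤ m := by simpa [Nat.lt_succ_iff] using Finset.mem_range.mp hk
  obtain ⟨n, rfl⟩ := Nat.exists_eq_add_of_le hk'
  have e1 : k + n + 1 - 1 - k = n := by omega
  have e2 : k + n - n = k := by omega
  rw [e1, e2]
  have e4 : (k + n).choose k = (k + n).choose n := by
    have h := Nat.choose_symm (show k ≤ k + n by omega)
    rw [show k + n - k = n by omega] at h
    exact h.symm
  rw [e4]
  unfold wk
  rw [e2]
  rw [Nat.add_comm k n]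
  rw [show n + k - k = n by omega]
  rw [term_id n k (((n + k).choose n : ℕ) : ℝ) (muk (n + k) n) (muk_ne (n + k) n (by omega))]
  unfold muk la lb rt
  push_cast
  ring

lemma hsub (m : ℕ) : paperE m m = (paperE m (m + 1)).submatrix Fin.succ Fin.succ := by
  funext j k
  simp only [paperE, Matrix.submatrix_apply, Matrix.of_apply, Fin.val_succ]
  push_cast
  split_ifs <;> first | ring1 | omega | (exfalso; omega)

lemma hadj (m : ℕ) :
    (paperE m (m + 1)).adjugate 0 0 = ((paperE m (m + 1)).submatrix Fin.succ Fin.succ).det := by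
  rw [Matrix.adjugate_apply, Matrix.det_succ_row_zero]
  rw [Finset.sum_eq_single_of_mem 0 (Finset.mem_univ _)]
  · have hsm : ((paperE m (m + 1)).updateRow 0 (Pi.single 0 1)).submatrix
        Fin.succ (Fin.succAbove 0)
        = (paperE m (m + 1)).submatrix Fin.succ Fin.succ := by
      funext a b
      simp [Matrix.submatrix_apply, Matrix.updateRow_ne (Fin.succ_ne_zero a),
        Fin.succAbove_zero]
    rw [hsm]
    simp [Matrix.updateRow_self]
  · intro b _ hb
    simp [Matrix.updateRow_self, Pi.single_eq_of_ne hb]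

end PaperAux

/-- `det E_m(m) = Δ(m) · det E_m(m+1)`; equivalently,
`det E_m(m+1) / det E_m(m) = Δ(m)⁻¹` whenever the quotient is defined. -/
theorem det_paperE_ratio (m : ℕ) (hm : 1 ≤ m) :
    (paperE m m).det = paperDelta m * (paperE m (m + 1)).det := by
  classical
  have hMv := PaperAux.mulVec_v m
  have he : (fun j : Fin (m + 1) => if (j : ℕ) = 0 then (1 : ℝ) else 0)
      = Pi.single 0 1 := by
    funext j
    by_cases hj : j = 0
    · subst hj; simp
    · rw [Pi.single_eq_of_ne hj, if_neg (by rwa [Fin.ext_iff, Fin.val_zero] at hj)]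
  have h1 : (paperE m (m + 1)).adjugate.mulVec ((paperE m (m + 1)).mulVec
        (fun j : Fin (m + 1) =>
          ∑ k ∈ Finset.range (m + 1), PaperAux.wk m k * (PaperAux.pkk m k).coeff (j : ℕ)))
      = (paperE m (m + 1)).det • (fun j : Fin (m + 1) =>
          ∑ k ∈ Finset.range (m + 1), PaperAux.wk m k * (PaperAux.pkk m k).coeff (j : ℕ)) := by
    rw [Matrix.mulVec_mulVec, Matrix.adjugate_mul, Matrix.smul_mulVec, Matrix.one_mulVec]
  rw [hMv, he] at h1
  have h2 := congrFun h1 0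
  rw [Matrix.mulVec_single] at h2
  have hone : (paperE m (m + 1)).adjugate 0 0
      = (paperE m (m + 1)).det *
        ∑ k ∈ Finset.range (m + 1), PaperAux.wk m k * (PaperAux.pkk m k).coeff 0 := by
    simpa using h2
  have hv0 := PaperAux.v_zero m
  rw [PaperAux.hsub m, ← PaperAux.hadj m, hone, hv0]
  ring
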